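/- Let f, n, m be natural numbers with n > 3f and m ≥ n − f. Let P be a multiset of real numbers with card P = n and let U be a sub-multiset of P with card U = m. Let x ∈ U and let b be a real number. If the destination D(x, P) = (min(x, P_(f+1)) + max(x, P_(n−f)))/2 satisfies D(x, P) < min U + b, then the upper end of the trimmed range satisfies max(x, P_(n−f)) < min U + 2b. -/

import Mathlib

/-- The k-th smallest element (1-indexed, counted with multiplicity) of a
multiset of real numbers. -/
noncomputable def nth (S : Multiset ℝ) (k : ℕ) : ℝ :=
  (S.sort (· ≤ ·)).getD (k - 1) 0

/-- The smallest element of a (nonempty) multiset of reals. -/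
noncomputable def mmin (S : Multiset ℝ) : ℝ := nth S 1

/-- The largest element of a (nonempty) multiset of reals. -/
noncomputable def mmax (S : Multiset ℝ) : ℝ := nth S S.card

/-- The diameter of a (nonempty) multiset of reals. -/
noncomputable def mdiam (S : Multiset ℝ) : ℝ := mmax S - mmin S

lemma mmin_le {S : Multiset ℝ} {y : ℝ} (hy : y ∈ S) : mmin S ≤ y := by
  have hmem : y ∈ S.sort (· ≤ ·) := by rwa [Multiset.mem_sort]
  have hs := Multiset.pairwise_sort S (· ≤ ·)
  unfold mmin nth
  cases h : S.sort (· ≤ ·) with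
  | nil => rw [h] at hmem; simp at hmem
  | cons a t =>
      rw [h] at hmem hs
      simp only [List.getD, Nat.sub_self]
      rw [List.pairwise_cons] at hs
      rcases List.mem_cons.mp hmem with rfl | hyt
      · simp
      · simpa using hs.1 y hyt

-- countP lower bound from nth value
lemma countP_lt_of_nth_lt {P : Multiset ℝ} {c : ℝ} {k : ℕ} (hk : k < Multiset.card P)
    (h : nth P (k + 1) < c) : k + 1 ≤ Multiset.countP (fun y => y < c) P := by
  set l := P.sort (· ≤ ·) with hl
  have hlen : l.length = Multiset.card P := Multiset.length_sort _
  have hs : l.Pairwise (· ≤ ·) := Multiset.pairwise_sort _ _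
  have hkl : k < l.length := by omega
  have hval : nth P (k + 1) = l.get ⟨k, hkl⟩ := by
    unfold nth
    rw [List.getD_eq_getElem?_getD]
    simp only [Nat.add_sub_cancel]
    rw [List.getElem?_eq_getElem hkl]
    rfl
  have hcount : Multiset.countP (fun y => y < c) P = l.countP (fun y => decide (y < c)) := by
    conv_lhs => rw [← Multiset.sort_eq P (· ≤ ·)]
    rfl
  rw [hcount]
  have hsub : (l.take (k+1)).Sublist l := List.take_sublist _ _
  have hall : ∀ y ∈ l.take (k+1), decide (y < c) = true := by
    intro y hy
    obtain ⟨i, hi, rfl⟩ := List.mem_take_iff_getElem.mp hy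
    have hik : i ≤ k := by omega
    have : l[i] ≤ l.get ⟨k, hkl⟩ := by
      rcases eq_or_lt_of_le hik with rfl | hik'
      · simp
      · have := List.Pairwise.rel_get_of_lt hs (a := ⟨i, by omega⟩) (b := ⟨k, hkl⟩) (by simpa using hik')
        simpa using this
    simp only [decide_eq_true_eq]
    calc l[i] ≤ l.get ⟨k, hkl⟩ := this
      _ < c := by rw [← hval]; exact h
  have h1 : (l.take (k+1)).countP (fun y => decide (y < c)) = (l.take (k+1)).length :=
    List.countP_eq_length.mpr hall
  have h2 := List.Sublist.countP_le hsub (p := fun y => decide (y < c))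
  have h3 : (l.take (k+1)).length = k + 1 := by
    rw [List.length_take]; omega
  omega

theorem stmt9 (f n m : ℕ) (P U : Multiset ℝ) (x b : ℝ)
    (hn : n > 3 * f) (hm : m ≥ n - f)
    (hP : Multiset.card P = n) (hU : U ≤ P) (hUm : Multiset.card U = m)
    (hx : x ∈ U)
    (hD : (min x (nth P (f + 1)) + max x (nth P (n - f))) / 2 < mmin U + b) :
    max x (nth P (n - f)) < mmin U + 2 * b := by
  set c := mmin U with hc
  have hxc : c ≤ x := mmin_le hx
  have hnth : c ≤ nth P (f + 1) := by
    by_contra h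
    push_neg at h
    have hk : f < Multiset.card P := by omega
    have hlow := countP_lt_of_nth_lt hk h
    have hsplit : P = P - U + U := (tsub_add_cancel_of_le hU).symm
    have hcU : Multiset.countP (fun y => y < c) U = 0 := by
      rw [Multiset.countP_eq_zero]
      intro y hy
      exact not_lt.mpr (mmin_le hy)
    have hcsub : Multiset.countP (fun y => y < c) (P - U) ≤ Multiset.card (P - U) :=
      Multiset.countP_le_card _ _
    have hcard : Multiset.card (P - U) = n - m := by
      rw [Multiset.card_sub hU, hP, hUm]
    have : Multiset.countP (fun y => y < c) P =
        Multiset.countP (fun y => y < c) (P - U) + Multiset.countP (fun y => y < c) U := by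
      conv_lhs => rw [hsplit]
      exact Multiset.countP_add _ _ _
    omega
  have hmin : c ≤ min x (nth P (f + 1)) := le_min hxc hnth
  have := min_le_max (a := x) (b := nth P (n - f))
  linarith [min_le_left x (nth P (f+1))]
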